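/- Let I : (0,∞) → [0,∞) be nonincreasing and let z > 0 be such that ∫_0^{π/z} λ·I(λ) dλ < ∞. Then for every T > 0, ∫_0^T sin(λz)·I(λ) dλ ≤ z·∫_0^{π/z} λ·I(λ) dλ. -/

import Mathlib

open MeasureTheory Real

private lemma II_mono {f : ℝ → ℝ} {a b c d : ℝ} (h : IntervalIntegrable f volume a b)
    (hab : a ≤ b) (hcd : c ≤ d) (hac : a ≤ c) (hdb : d ≤ b) :
    IntervalIntegrable f volume c d :=
  h.mono_set (by
    rw [Set.uIcc_of_le hcd, Set.uIcc_of_le hab]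
    exact Set.Icc_subset_Icc hac hdb)

private lemma sin_base (z p : ℝ) (hz : 0 < z) (hp : p = Real.pi / z)
    (g : ℝ → ℝ) (hg0 : ∀ x, 0 < x → 0 ≤ g x)
    (hganti : ∀ x y, 0 < x → x ≤ y → g y ≤ g x)
    (S : ℝ) (hS : 0 < S) (hS2 : S ≤ 2 * p)
    (hint : IntervalIntegrable (fun x => Real.sin (x * z) * g x) volume 0 S) :
    0 ≤ ∫ x in (0:ℝ)..S, Real.sin (x * z) * g x := by
  have hp0 : 0 < p := by rw [hp]; exact div_pos Real.pi_pos hz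
  have hpz : p * z = Real.pi := by rw [hp]; field_simp
  by_cases hSp : S ≤ p
  · apply intervalIntegral.integral_nonneg hS.le
    intro x hx
    rcases eq_or_lt_of_le hx.1 with h0 | h0
    · simp [← h0]
    · apply mul_nonneg _ (hg0 x h0)
      apply Real.sin_nonneg_of_nonneg_of_le_pi (by positivity)
      calc x * z ≤ p * z := by nlinarith [hx.2]
        _ = Real.pi := hpz
  · push_neg at hSp
    have h1 : IntervalIntegrable (fun x => Real.sin (x * z) * g x) volume 0 p :=
      II_mono hint hS.le hp0.le le_rfl hSp.le
    have h2 : IntervalIntegrable (fun x => Real.sin (x * z) * g x) volume p S :=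
      II_mono hint hS.le hSp.le hp0.le le_rfl
    have hsplit : (∫ x in (0:ℝ)..S, Real.sin (x * z) * g x) =
        (∫ x in (0:ℝ)..p, Real.sin (x * z) * g x) +
        ∫ x in p..S, Real.sin (x * z) * g x :=
      (intervalIntegral.integral_add_adjacent_intervals h1 h2).symm
    -- rewrite the second integral via translation
    have hshift : (∫ x in p..S, Real.sin (x * z) * g x) =
        - ∫ x in (0:ℝ)..(S - p), Real.sin (x * z) * g (x + p) := by
      have := intervalIntegral.integral_comp_add_right
        (fun x => Real.sin (x * z) * g x) p (a := 0) (b := S - p)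
      simp only [zero_add, sub_add_cancel] at this
      rw [← this, ← intervalIntegral.integral_neg]
      apply intervalIntegral.integral_congr
      intro x _
      show Real.sin ((x + p) * z) * g (x + p) = -(Real.sin (x * z) * g (x + p))
      rw [add_mul, hpz, Real.sin_add_pi]
      ring
    have hI2 : IntervalIntegrable (fun x => Real.sin (x * z) * g (x + p)) volume 0 (S - p) := by
      have h5 := (h2.comp_add_right p)
      simp only [sub_self] at h5
      have heq : (fun x => Real.sin (x * z) * g (x + p)) =
          fun x => -(Real.sin ((x + p) * z) * g (x + p)) := by
        funext x
        rw [add_mul, hpz, Real.sin_add_pi]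
        ring
      rw [heq]
      exact h5.neg
    have hI3 : IntervalIntegrable (fun x => Real.sin (x * z) * g x) volume 0 (S - p) :=
      II_mono hint hS.le (by linarith) le_rfl (by linarith)
    have hI4 : IntervalIntegrable (fun x => Real.sin (x * z) * g x) volume (S - p) p :=
      II_mono h1 hp0.le (by linarith) (by linarith) le_rfl
    have step1 : (∫ x in (0:ℝ)..(S - p), Real.sin (x * z) * g (x + p)) ≤
        ∫ x in (0:ℝ)..(S - p), Real.sin (x * z) * g x := by
      apply intervalIntegral.integral_mono_on (by linarith) hI2 hI3
      intro x hx
      rcases eq_or_lt_of_le hx.1 with h0 | h0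
      · simp [← h0]
      · have hsin : 0 ≤ Real.sin (x * z) := by
          apply Real.sin_nonneg_of_nonneg_of_le_pi (by positivity)
          calc x * z ≤ p * z := by nlinarith [hx.2]
            _ = Real.pi := hpz
        exact mul_le_mul_of_nonneg_left (hganti x (x + p) h0 (by linarith)) hsin
    have step2 : (∫ x in (0:ℝ)..(S - p), Real.sin (x * z) * g x) ≤
        ∫ x in (0:ℝ)..p, Real.sin (x * z) * g x := by
      have := (intervalIntegral.integral_add_adjacent_intervals hI3 hI4).symm
      rw [this]
      have : 0 ≤ ∫ x in (S - p)..p, Real.sin (x * z) * g x := by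
        apply intervalIntegral.integral_nonneg (by linarith)
        intro x hx
        have h0 : 0 < x := by linarith [hx.1]
        apply mul_nonneg _ (hg0 x h0)
        apply Real.sin_nonneg_of_nonneg_of_le_pi (by positivity)
        calc x * z ≤ p * z := by nlinarith [hx.2]
          _ = Real.pi := hpz
      linarith
    rw [hsplit, hshift]
    linarith

private lemma sin_key (z p : ℝ) (hz : 0 < z) (hp : p = Real.pi / z) :
    ∀ n : ℕ, ∀ g : ℝ → ℝ, (∀ x, 0 < x → 0 ≤ g x) →
    (∀ x y, 0 < x → x ≤ y → g y ≤ g x) →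
    ∀ S, 0 < S → S ≤ 2 * p * n →
    IntervalIntegrable (fun x => Real.sin (x * z) * g x) volume 0 S →
    0 ≤ ∫ x in (0:ℝ)..S, Real.sin (x * z) * g x := by
  have hp0 : 0 < p := by rw [hp]; exact div_pos Real.pi_pos hz
  have hpz : p * z = Real.pi := by rw [hp]; field_simp
  intro n
  induction n with
  | zero => intro g _ _ S hS hSn _; simp at hSn; linarith
  | succ n ih =>
    intro g hg0 hganti S hS hSn hint
    by_cases hS2 : S ≤ 2 * p
    · exact sin_base z p hz hp g hg0 hganti S hS hS2 hint
    · push_neg at hS2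
      have h1 : IntervalIntegrable (fun x => Real.sin (x * z) * g x) volume 0 (2 * p) :=
        II_mono hint hS.le (by linarith) le_rfl hS2.le
      have h2 : IntervalIntegrable (fun x => Real.sin (x * z) * g x) volume (2 * p) S :=
        II_mono hint hS.le hS2.le (by linarith) le_rfl
      have hsplit : (∫ x in (0:ℝ)..S, Real.sin (x * z) * g x) =
          (∫ x in (0:ℝ)..(2 * p), Real.sin (x * z) * g x) +
          ∫ x in (2 * p)..S, Real.sin (x * z) * g x :=
        (intervalIntegral.integral_add_adjacent_intervals h1 h2).symm
      have heq : ∀ x : ℝ, Real.sin ((x + 2 * p) * z) * g (x + 2 * p) =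
          Real.sin (x * z) * g (x + 2 * p) := by
        intro x
        have : (x + 2 * p) * z = x * z + 2 * Real.pi := by rw [add_mul]; rw [← hpz]; ring
        rw [this, Real.sin_add_two_pi]
      have hshift : (∫ x in (2 * p)..S, Real.sin (x * z) * g x) =
          ∫ x in (0:ℝ)..(S - 2 * p), Real.sin (x * z) * g (x + 2 * p) := by
        have := intervalIntegral.integral_comp_add_right
          (fun x => Real.sin (x * z) * g x) (2 * p) (a := 0) (b := S - 2 * p)
        simp only [zero_add, sub_add_cancel] at this
        rw [← this]
        exact intervalIntegral.integral_congr fun x _ => heq x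
      have hI2 : IntervalIntegrable (fun x => Real.sin (x * z) * g (x + 2 * p)) volume 0
          (S - 2 * p) := by
        have := h2.comp_add_right (2 * p)
        simp only [sub_self] at this
        have h3 : (fun x => Real.sin ((x + 2 * p) * z) * g (x + 2 * p)) =
            fun x => Real.sin (x * z) * g (x + 2 * p) := funext heq
        rw [h3] at this
        exact this
      have hterm2 : 0 ≤ ∫ x in (0:ℝ)..(S - 2 * p), Real.sin (x * z) * g (x + 2 * p) := by
        apply ih (fun x => g (x + 2 * p))
        · intro x hx; exact hg0 _ (by linarith)
        · intro x y hx hxy; exact hganti (x + 2 * p) (y + 2 * p) (by linarith) (by linarith)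
        · linarith
        · push_cast at hSn ⊢; linarith
        · exact hI2
      have hterm1 : 0 ≤ ∫ x in (0:ℝ)..(2 * p), Real.sin (x * z) * g x :=
        sin_base z p hz hp g hg0 hganti (2 * p) (by linarith) le_rfl h1
      rw [hsplit, hshift]
      linarith

theorem statement18 (I : ℝ → ℝ) (hI0 : ∀ x ∈ Set.Ioi (0 : ℝ), 0 ≤ I x)
    (hIanti : AntitoneOn I (Set.Ioi 0)) (z : ℝ) (hz : 0 < z)
    (hint : IntegrableOn (fun l => l * I l) (Set.Ioo 0 (Real.pi / z))) :
    ∀ T : ℝ, 0 < T →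
      ∫ l in Set.Ioo 0 T, Real.sin (l * z) * I l ≤
        z * ∫ l in Set.Ioo 0 (Real.pi / z), l * I l := by
  intro T hT
  set p := Real.pi / z with hp
  have hp0 : 0 < p := div_pos Real.pi_pos hz
  have hpz : p * z = Real.pi := by rw [hp]; field_simp
  set f := fun l => Real.sin (l * z) * I l with hf
  -- measurability
  have hImeas : AEMeasurable I (volume.restrict (Set.Ioi 0)) :=
    aemeasurable_restrict_of_antitoneOn measurableSet_Ioi hIanti
  have hfmeas : ∀ A : Set ℝ, A ⊆ Set.Ioi 0 →
      AEStronglyMeasurable f (volume.restrict A) := by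
    intro A hA
    have : AEMeasurable I (volume.restrict A) :=
      hImeas.mono_measure (Measure.restrict_mono hA le_rfl)
    exact ((Real.continuous_sin.comp (continuous_id.mul continuous_const)).aemeasurable.mul
      this).aestronglyMeasurable
  -- integrability on (0, p)
  have hintp : IntegrableOn f (Set.Ioo 0 p) := by
    apply Integrable.mono' (hint.const_mul z) (hfmeas _ (fun x hx => hx.1))
    filter_upwards [ae_restrict_mem measurableSet_Ioo] with l hl
    have h0 : 0 < l := hl.1
    have hsin0 : 0 ≤ Real.sin (l * z) :=
      Real.sin_nonneg_of_nonneg_of_le_pi (by positivity)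
        (by calc l * z ≤ p * z := by nlinarith [hl.2]
              _ = Real.pi := hpz)
    have hsinle : Real.sin (l * z) ≤ l * z := (Real.sin_lt (by positivity)).le
    have hI : 0 ≤ I l := hI0 l h0
    rw [Real.norm_eq_abs, abs_of_nonneg (mul_nonneg hsin0 hI)]
    calc Real.sin (l * z) * I l ≤ (l * z) * I l :=
          mul_le_mul_of_nonneg_right hsinle hI
      _ = z * (l * I l) := by ring
  -- integrability on (0, S) for any S
  have hintS : ∀ S : ℝ, 0 < S → IntegrableOn f (Set.Ioo 0 S) := by
    intro S hS
    by_cases hSp : S ≤ p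
    · exact hintp.mono_set (Set.Ioo_subset_Ioo le_rfl hSp)
    · push_neg at hSp
      have htail : IntegrableOn f (Set.Icc p S) := by
        have hconst : IntegrableOn (fun _ : ℝ => I p) (Set.Icc p S) := by
          apply (integrableOn_const_iff enorm_ne_top).mpr
          right
          exact measure_Icc_lt_top
        apply Integrable.mono' hconst
          (hfmeas _ (fun x hx => lt_of_lt_of_le hp0 hx.1))
        filter_upwards [ae_restrict_mem measurableSet_Icc] with l hl
        have h0 : 0 < l := lt_of_lt_of_le hp0 hl.1
        have hI : 0 ≤ I l := hI0 l h0
        rw [Real.norm_eq_abs, abs_mul]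
        calc |Real.sin (l * z)| * |I l| ≤ 1 * |I l| :=
              mul_le_mul_of_nonneg_right (abs_le.mpr ⟨Real.neg_one_le_sin _, Real.sin_le_one _⟩) (abs_nonneg _)
          _ = I l := by rw [one_mul, abs_of_nonneg hI]
          _ ≤ I p := hIanti (Set.mem_Ioi.mpr hp0) (Set.mem_Ioi.mpr h0) hl.1
      exact (hintp.union htail).mono_set
        (fun x hx => (lt_or_ge x p).elim (fun h => Or.inl ⟨hx.1, h⟩)
          (fun h => Or.inr ⟨h, hx.2.le⟩))
  have hII : ∀ S : ℝ, 0 < S → IntervalIntegrable f volume 0 S := fun S hS =>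
    (intervalIntegrable_iff_integrableOn_Ioo_of_le hS.le).mpr (hintS S hS)
  -- Step A : reduce to T = p
  have hA : (∫ l in (0:ℝ)..T, f l) ≤ ∫ l in (0:ℝ)..p, f l := by
    by_cases hTp : T ≤ p
    · have h1 := hII T hT
      have h2 : IntervalIntegrable f volume T p :=
        II_mono (hII p hp0) hp0.le hTp hT.le le_rfl
      have := (intervalIntegral.integral_add_adjacent_intervals h1 h2).symm
      have hpos : 0 ≤ ∫ l in T..p, f l := by
        apply intervalIntegral.integral_nonneg hTp
        intro x hx
        have h0 : 0 < x := lt_of_lt_of_le hT hx.1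
        apply mul_nonneg _ (hI0 x h0)
        apply Real.sin_nonneg_of_nonneg_of_le_pi (by positivity)
        calc x * z ≤ p * z := by nlinarith [hx.2]
          _ = Real.pi := hpz
      linarith [this]
    · push_neg at hTp
      have h1 : IntervalIntegrable f volume 0 p := hII p hp0
      have h2 : IntervalIntegrable f volume p T :=
        II_mono (hII T hT) hT.le hTp.le hp0.le le_rfl
      have hsplit := (intervalIntegral.integral_add_adjacent_intervals h1 h2).symm
      have hshift : (∫ x in p..T, f x) =
          - ∫ x in (0:ℝ)..(T - p), Real.sin (x * z) * I (x + p) := by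
        have := intervalIntegral.integral_comp_add_right f p (a := 0) (b := T - p)
        simp only [zero_add, sub_add_cancel] at this
        rw [← this, ← intervalIntegral.integral_neg]
        apply intervalIntegral.integral_congr
        intro x _
        have hx : (x + p) * z = x * z + Real.pi := by rw [add_mul, hpz]
        simp only [hf, hx, Real.sin_add_pi]
        ring
      have hI2 : IntervalIntegrable (fun x => Real.sin (x * z) * I (x + p)) volume 0
          (T - p) := by
        have h5 := h2.comp_add_right p
        simp only [sub_self] at h5
        have heq : (fun x => Real.sin (x * z) * I (x + p)) =
            fun x => -(f (x + p)) := by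
          funext x
          simp only [hf]
          rw [add_mul, hpz, Real.sin_add_pi]
          ring
        rw [heq]
        exact h5.neg
      obtain ⟨n, hn⟩ := exists_nat_ge ((T - p) / (2 * p))
      have hTn : T - p ≤ 2 * p * n := by
        rw [div_le_iff₀ (by linarith)] at hn
        linarith
      have hkey : 0 ≤ ∫ x in (0:ℝ)..(T - p), Real.sin (x * z) * I (x + p) := by
        apply sin_key z p hz hp n (fun x => I (x + p))
        · intro x hx; exact hI0 _ (by simp; linarith)
        · intro x y hx hxy
          exact hIanti (Set.mem_Ioi.mpr (by linarith)) (Set.mem_Ioi.mpr (by linarith))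
            (by linarith)
        · linarith
        · exact hTn
        · exact hI2
      rw [hsplit, hshift]
      linarith
  -- Step B : bound the integral up to p
  have hB : (∫ l in (0:ℝ)..p, f l) ≤ z * ∫ l in Set.Ioo 0 p, l * I l := by
    rw [intervalIntegral.integral_of_le hp0.le, integral_Ioc_eq_integral_Ioo]
    have hmono : (∫ l in Set.Ioo 0 p, f l) ≤ ∫ l in Set.Ioo 0 p, z * (l * I l) := by
      apply setIntegral_mono_on hintp (hint.const_mul z) measurableSet_Ioo
      intro l hl
      have h0 : 0 < l := hl.1
      have hI : 0 ≤ I l := hI0 l h0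
      calc Real.sin (l * z) * I l ≤ (l * z) * I l :=
            mul_le_mul_of_nonneg_right (Real.sin_lt (by positivity)).le hI
        _ = z * (l * I l) := by ring
    calc (∫ l in Set.Ioo 0 p, f l) ≤ ∫ l in Set.Ioo 0 p, z * (l * I l) := hmono
      _ = z * ∫ l in Set.Ioo 0 p, l * I l := integral_const_mul z _
  show (∫ l in Set.Ioo 0 T, f l) ≤ z * ∫ l in Set.Ioo 0 p, l * I l
  calc (∫ l in Set.Ioo 0 T, f l)
      = ∫ l in (0:ℝ)..T, f l := by
        rw [intervalIntegral.integral_of_le hT.le, ← integral_Ioc_eq_integral_Ioo]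
    _ ≤ ∫ l in (0:ℝ)..p, f l := hA
    _ ≤ z * ∫ l in Set.Ioo 0 p, l * I l := hB
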